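/- Let q be a power of 2. The set of nuclei of all conics contained in the Veronese variety V_3(F_q) ⊂ PG(5,F_q) is exactly the plane of projective classes of symmetric 3×3 matrices over F_q with all diagonal entries zero. -/

import Mathlib

open Matrix

section AuxiliaryLemmas
variable {F : Type*} [Field F] [Fintype F]

omit [Fintype F] in
lemma sq_inj' (h2 : (2:F) = 0) {x y : F} (h : x^2 = y^2) : x = y := by
  have h3 : (x - y)^2 = 0 := by linear_combination h + (y^2 - x*y)*h2
  exact sub_eq_zero.mp (pow_eq_zero_iff two_ne_zero |>.mp h3)

lemma sq_surj' (h2 : (2:F) = 0) : Function.Surjective (fun x : F => x^2) :=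
  Finite.injective_iff_surjective.mp (fun _ _ h => sq_inj' h2 h)

omit [Fintype F] in
lemma dot_vmv (u v w u' : Fin 3 → F) :
    u ⬝ᵥ (vecMulVec v w) *ᵥ u' = (u ⬝ᵥ v) * (w ⬝ᵥ u') := by
  simp [dotProduct, mulVec, vecMulVec_apply, Fin.sum_univ_three]
  ring

omit [Fintype F] in
lemma char_two' (h2 : ringChar F = 2) : (2:F) = 0 := by
  have : CharP F 2 := h2 ▸ ringChar.charP F
  exact_mod_cast CharP.cast_eq_zero F 2

/-- Given a pair of vectors `v, w` in `F³` together with a "dual" pair `u, u'`, the matrix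
`A = v ⊗ w + w ⊗ v` is the nucleus of the conic determined by `W = span {v, w}`. -/
lemma nucleus_mem (h2' : (2:F) = 0)
    (v w u u' : Fin 3 → F)
    (huv : u ⬝ᵥ v = 1) (huw : u ⬝ᵥ w = 0) (hu'v : u' ⬝ᵥ v = 0) (hu'w : u' ⬝ᵥ w = 1)
    (A : Matrix (Fin 3) (Fin 3) F) (hA : A = vecMulVec v w + vecMulVec w v) :
    ∃ W : Submodule F (Fin 3 → F), Module.finrank F W = 2 ∧
      A ∈ Submodule.span F {M : Matrix (Fin 3) (Fin 3) F | ∃ v ∈ W, M = vecMulVec v v} ∧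
      ∀ v' ∈ W, v' ≠ 0 →
        ∀ s t : F, ∀ w' ∈ W, w' ≠ 0 → ∀ c : F, c ≠ 0 →
          s • A + t • vecMulVec v' v' = c • vecMulVec w' w' → ∃ d : F, w' = d • v' := by
  have hli : LinearIndependent F ![v, w] := by
    rw [LinearIndependent.pair_iff]
    intro s t hst
    constructor
    · have := congrArg (fun x => u ⬝ᵥ x) hst
      simpa [dotProduct_add, dotProduct_smul, huv, huw] using this
    · have := congrArg (fun x => u' ⬝ᵥ x) hst
      simpa [dotProduct_add, dotProduct_smul, hu'v, hu'w] using this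
  have hvw : ({v, w} : Set (Fin 3 → F)) = Set.range ![v, w] := by
    ext x
    simp [Fin.exists_fin_two, eq_comm, or_comm]
  refine ⟨Submodule.span F {v, w}, ?_, ?_, ?_⟩
  · rw [hvw, finrank_span_eq_card hli]
    simp
  · have hv : v ∈ Submodule.span F {v, w} := Submodule.subset_span (Set.mem_insert _ _)
    have hw : w ∈ Submodule.span F {v, w} := Submodule.subset_span (by simp)
    have hAeq : A = vecMulVec (v + w) (v + w) + vecMulVec v v + vecMulVec w w := by
      ext i j
      simp only [hA, Matrix.add_apply, vecMulVec_apply, Pi.add_apply]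
      linear_combination (-(v i * v j) - w i * w j) * h2'
    rw [hAeq]
    exact Submodule.add_mem _ (Submodule.add_mem _
      (Submodule.subset_span ⟨v + w, Submodule.add_mem _ hv hw, rfl⟩)
      (Submodule.subset_span ⟨v, hv, rfl⟩))
      (Submodule.subset_span ⟨w, hw, rfl⟩)
  · intro v' hv' _ s t w' hw' _ c hc hEq
    obtain ⟨γ, δ, hγδ⟩ := Submodule.mem_span_pair.mp hv'
    obtain ⟨α, β, hαβ⟩ := Submodule.mem_span_pair.mp hw'
    have huv' : u ⬝ᵥ v' = γ := by
      rw [← hγδ]; simp [dotProduct_add, dotProduct_smul, huv, huw]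
    have hu'v' : u' ⬝ᵥ v' = δ := by
      rw [← hγδ]; simp [dotProduct_add, dotProduct_smul, hu'v, hu'w]
    have huw' : u ⬝ᵥ w' = α := by
      rw [← hαβ]; simp [dotProduct_add, dotProduct_smul, huv, huw]
    have hu'w' : u' ⬝ᵥ w' = β := by
      rw [← hαβ]; simp [dotProduct_add, dotProduct_smul, hu'v, hu'w]
    have hA0 : u ⬝ᵥ A *ᵥ u = 0 := by
      rw [hA, Matrix.add_mulVec, dotProduct_add, dot_vmv, dot_vmv,
        dotProduct_comm w u, dotProduct_comm v u, huv, huw]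
      ring
    have hA0' : u' ⬝ᵥ A *ᵥ u' = 0 := by
      rw [hA, Matrix.add_mulVec, dotProduct_add, dot_vmv, dot_vmv,
        dotProduct_comm w u', dotProduct_comm v u', hu'v, hu'w]
      ring
    have key1 : t * γ ^ 2 = c * α ^ 2 := by
      have h := congrArg (fun M => u ⬝ᵥ M *ᵥ u) hEq
      simp only [Matrix.add_mulVec, Matrix.smul_mulVec, dotProduct_add,
        dotProduct_smul, dot_vmv, smul_eq_mul, hA0, dotProduct_comm v' u,
        dotProduct_comm w' u, huv', huw'] at h
      linear_combination h
    have key2 : t * δ ^ 2 = c * β ^ 2 := by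
      have h := congrArg (fun M => u' ⬝ᵥ M *ᵥ u') hEq
      simp only [Matrix.add_mulVec, Matrix.smul_mulVec, dotProduct_add,
        dotProduct_smul, dot_vmv, smul_eq_mul, hA0', dotProduct_comm v' u',
        dotProduct_comm w' u', hu'v', hu'w'] at h
      linear_combination h
    obtain ⟨μ, hμ⟩ := sq_surj' h2' (t / c)
    simp only at hμ
    have hμ' : μ ^ 2 * c = t := by rw [hμ]; field_simp
    have hα : α = μ * γ := by
      refine (sq_inj' h2' ?_).symm
      have hc' : c * (μ * γ) ^ 2 = c * α ^ 2 := by linear_combination γ^2 * hμ' + key1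
      exact mul_left_cancel₀ hc hc'
    have hβ : β = μ * δ := by
      refine (sq_inj' h2' ?_).symm
      have hc' : c * (μ * δ) ^ 2 = c * β ^ 2 := by linear_combination δ^2 * hμ' + key2
      exact mul_left_cancel₀ hc hc'
    refine ⟨μ, ?_⟩
    rw [← hαβ, ← hγδ, hα, hβ]
    module

/-- If a nucleus `A = a • e⊗e + b • f⊗f + c • (e⊗f + f⊗e)` satisfies the tangency condition,
then the coefficient `a` vanishes. -/
lemma coeff_zero (h2' : (2:F) = 0) {W : Submodule F (Fin 3 → F)} {e f : Fin 3 → F}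
    (he : e ∈ W) (hf : f ∈ W)
    (hindep : ∀ s t : F, s • e + t • f = 0 → s = 0 ∧ t = 0)
    {A : Matrix (Fin 3) (Fin 3) F} {a b c : F}
    (hA : A = a • vecMulVec e e + b • vecMulVec f f + c • (vecMulVec e f + vecMulVec f e))
    (htan : ∀ v ∈ W, v ≠ 0 →
          ∀ s t : F, ∀ w ∈ W, w ≠ 0 → ∀ k : F, k ≠ 0 →
            s • A + t • vecMulVec v v = k • vecMulVec w w → ∃ d : F, w = d • v) :
    a = 0 := by
  by_contra ha
  obtain ⟨α, hα⟩ := sq_surj' h2' a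
  simp only at hα
  have hα0 : α ≠ 0 := by rintro rfl; rw [← hα] at ha; simp at ha
  set β := c / α with hβdef
  have hcc : α * β = c := by rw [hβdef]; field_simp
  have hf0 : f ≠ 0 := by
    intro h
    exact one_ne_zero ((hindep 0 1 (by simp [h])).2)
  set w := α • e + β • f with hwdef
  have hwW : w ∈ W := Submodule.add_mem _ (Submodule.smul_mem _ _ he) (Submodule.smul_mem _ _ hf)
  have hw0 : w ≠ 0 := fun h => hα0 (hindep α β h).1
  have hEq : (1:F) • A + (β^2 - b) • vecMulVec f f = (1:F) • vecMulVec w w := by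
    ext i j
    simp only [hA, hwdef, Matrix.add_apply, Matrix.smul_apply, vecMulVec_apply,
      Pi.add_apply, Pi.smul_apply, smul_eq_mul]
    linear_combination (-(e i * e j)) * hα + (-(e i * f j) - f i * e j) * hcc
  obtain ⟨d, hd⟩ := htan f hf hf0 1 (β^2 - b) w hwW hw0 1 one_ne_zero hEq
  refine hα0 ((hindep α (β - d) ?_).1)
  calc α • e + (β - d) • f = (α • e + β • f) - d • f := by module
    _ = 0 := by rw [← hwdef, hd]; simp

end AuxiliaryLemmas

/-- For `q` even, the nuclei of the conics contained in the Veronese variety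
`V₃(F_q) ⊂ PG(5, F_q)` form exactly the plane of (projective classes of) symmetric `3 × 3`
matrices with zero diagonal. A conic of `V₃(F_q)` is the set of points `⟨v ⊗ v⟩` for `v`
ranging over a 2-dimensional subspace `W ≤ F_q³`; a nonzero matrix `A` (in the plane spanned by
the conic) is its nucleus iff every line through `A` and a conic point is tangent to the conic,
i.e. meets the conic only at that point. -/
theorem stmt_10 (F : Type*) [Field F] [Fintype F] (h2 : ringChar F = 2) :
    {A : Matrix (Fin 3) (Fin 3) F | A.IsSymm ∧ A ≠ 0 ∧
      ∃ W : Submodule F (Fin 3 → F), Module.finrank F W = 2 ∧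
        A ∈ Submodule.span F {M : Matrix (Fin 3) (Fin 3) F | ∃ v ∈ W, M = vecMulVec v v} ∧
        ∀ v ∈ W, v ≠ 0 →
          ∀ s t : F, ∀ w ∈ W, w ≠ 0 → ∀ c : F, c ≠ 0 →
            s • A + t • vecMulVec v v = c • vecMulVec w w → ∃ d : F, w = d • v} =
    {A : Matrix (Fin 3) (Fin 3) F | A.IsSymm ∧ A ≠ 0 ∧ ∀ i, A i i = 0} := by
  have h2' : (2:F) = 0 := char_two' h2
  ext A
  simp only [Set.mem_setOf_eq]
  constructor
  · rintro ⟨hsym, hA0, W, hrk, hspan, htan⟩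
    refine ⟨hsym, hA0, ?_⟩
    let b := Module.finBasisOfFinrankEq F W hrk
    set e : Fin 3 → F := ((b 0 : W) : Fin 3 → F) with he_def
    set f : Fin 3 → F := ((b 1 : W) : Fin 3 → F) with hf_def
    have he : e ∈ W := (b 0).2
    have hf : f ∈ W := (b 1).2
    have hindep : ∀ s t : F, s • e + t • f = 0 → s = 0 ∧ t = 0 := by
      intro s t hst
      have h0 : s • b 0 + t • b 1 = (0 : W) := by
        apply Subtype.ext
        rw [Submodule.coe_add, SetLike.val_smul, SetLike.val_smul, ZeroMemClass.coe_zero,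
          ← he_def, ← hf_def]
        exact hst
      have hli := Fintype.linearIndependent_iff.mp b.linearIndependent ![s, t]
        (by rwa [Fin.sum_univ_two, Matrix.cons_val_zero, Matrix.cons_val_one, Matrix.cons_val_zero])
      exact ⟨hli 0, hli 1⟩
    have hdecomp : ∀ x ∈ W, ∃ γ δ : F, γ • e + δ • f = x := by
      intro x hx
      refine ⟨b.repr ⟨x, hx⟩ 0, b.repr ⟨x, hx⟩ 1, ?_⟩
      have := b.sum_repr ⟨x, hx⟩
      rw [Fin.sum_univ_two] at this
      have h3 := congrArg (fun y : W => (y : Fin 3 → F)) this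
      simp only [Submodule.coe_add, SetLike.val_smul] at h3
      rw [← he_def, ← hf_def] at h3
      exact h3
    set N : Matrix (Fin 3) (Fin 3) F := vecMulVec e f + vecMulVec f e with hN
    have hsub : {M : Matrix (Fin 3) (Fin 3) F | ∃ v ∈ W, M = vecMulVec v v} ⊆
        (Submodule.span F {vecMulVec e e, vecMulVec f f, N} : Submodule F _) := by
      rintro M ⟨x, hx, rfl⟩
      obtain ⟨γ, δ, hx'⟩ := hdecomp x hx
      have : vecMulVec x x = (γ^2) • vecMulVec e e + (δ^2) • vecMulVec f f + (γ*δ) • N := by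
        ext i j
        simp only [← hx', hN, Matrix.add_apply, Matrix.smul_apply, vecMulVec_apply,
          Pi.add_apply, Pi.smul_apply, smul_eq_mul]
        ring
      rw [this]
      refine Submodule.add_mem _ (Submodule.add_mem _ ?_ ?_) ?_ <;>
        exact Submodule.smul_mem _ _ (Submodule.subset_span (by simp))
    have hAT : A ∈ Submodule.span F {vecMulVec e e, vecMulVec f f, N} :=
      (Submodule.span_le.mpr hsub) hspan
    obtain ⟨a, M1, hM1, hA1⟩ := Submodule.mem_span_insert.mp hAT
    obtain ⟨bb, M2, hM2, hM1e⟩ := Submodule.mem_span_insert.mp hM1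
    obtain ⟨cc, hM2e⟩ := Submodule.mem_span_singleton.mp hM2
    have hA : A = a • vecMulVec e e + bb • vecMulVec f f + cc • N := by
      rw [hA1, hM1e, ← hM2e]; module
    have ha0 : a = 0 := coeff_zero h2' he hf hindep hA htan
    have hA' : A = bb • vecMulVec f f + a • vecMulVec e e +
        cc • (vecMulVec f e + vecMulVec e f) := by
      rw [hA, hN]; module
    have hindep' : ∀ s t : F, s • f + t • e = 0 → s = 0 ∧ t = 0 := by
      intro s t h
      have := hindep t s (by rwa [add_comm])
      exact ⟨this.2, this.1⟩
    have hb0 : bb = 0 := coeff_zero h2' hf he hindep' hA' htan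
    intro i
    rw [hA, ha0, hb0, hN]
    simp only [zero_smul, zero_add, Matrix.smul_apply, Matrix.add_apply, Matrix.zero_apply,
      vecMulVec_apply, smul_eq_mul]
    linear_combination cc * (e i * f i) * h2'
  · rintro ⟨hsym, hA0, hdiag⟩
    refine ⟨hsym, hA0, ?_⟩
    have hS : ∀ i j, A j i = A i j := fun i j => by
      have := congrFun (congrFun hsym i) j
      simpa using this
    rcases ne_or_eq (A 0 1) 0 with ha | ha
    · refine nucleus_mem h2' ![1, 0, A 1 2 / A 0 1] ![0, A 0 1, A 0 2] ![1,0,0]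
        ![0, (A 0 1)⁻¹, 0] ?_ ?_ ?_ ?_ A ?_
      · simp [dotProduct, Fin.sum_univ_three]
      · simp [dotProduct, Fin.sum_univ_three]
      · simp [dotProduct, Fin.sum_univ_three]
      · simp [dotProduct, Fin.sum_univ_three]; field_simp
      · ext i j
        fin_cases i <;> fin_cases j <;>
          simp [vecMulVec_apply, hdiag, hS 0 1, hS 0 2, hS 1 2] <;>
          field_simp <;>
          linear_combination -(A 1 2 * A 0 2) * h2'
    rcases ne_or_eq (A 0 2) 0 with hb | hb
    · refine nucleus_mem h2' ![1, A 1 2 / A 0 2, 0] ![0, 0, A 0 2] ![1,0,0]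
        ![0, 0, (A 0 2)⁻¹] ?_ ?_ ?_ ?_ A ?_
      · simp [dotProduct, Fin.sum_univ_three]
      · simp [dotProduct, Fin.sum_univ_three]
      · simp [dotProduct, Fin.sum_univ_three]
      · simp [dotProduct, Fin.sum_univ_three]; field_simp
      · ext i j
        fin_cases i <;> fin_cases j <;>
          simp [vecMulVec_apply, hdiag, ha, hS 0 1, hS 0 2, hS 1 2] <;>
          field_simp
    have hc : A 1 2 ≠ 0 := by
      intro hc
      apply hA0
      ext i j
      fin_cases i <;> fin_cases j <;>
        simp [hdiag, ha, hb, hc, hS 0 1, hS 0 2, hS 1 2]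
    refine nucleus_mem h2' ![0, 1, 0] ![0, 0, A 1 2] ![0,1,0]
        ![0, 0, (A 1 2)⁻¹] ?_ ?_ ?_ ?_ A ?_
    · simp [dotProduct, Fin.sum_univ_three]
    · simp [dotProduct, Fin.sum_univ_three]
    · simp [dotProduct, Fin.sum_univ_three]
    · simp [dotProduct, Fin.sum_univ_three]; field_simp
    · ext i j
      fin_cases i <;> fin_cases j <;>
        simp [vecMulVec_apply, hdiag, ha, hb, hS 0 1, hS 0 2, hS 1 2]
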